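/- Let η be a nonnegative random variable with P(0 < η < t) ≤ C_α t^α for all t > 0, and suppose the integer d satisfies d < α + 1. Then sup_{ε ∈ (0,1)} E[η^{−(d−1)} 1{η > ε}] ≤ 1 + C_α(d−1)/(α+1−d), i.e. the truncated negative moments are bounded uniformly in ε. -/
import Mathlib


open MeasureTheory

/-- Under the margin condition `P(0 < η < t) ≤ C_α t^α` with integer `d < α + 1`,
the truncated negative moments `E[η^{-(d-1)} 1{η > ε}]` are bounded uniformly over
`ε ∈ (0,1)` by `1 + C_α (d-1)/(α+1-d)`. -/
theorem stmt9 {Ω : Type*} [MeasurableSpace Ω] (P : Measure Ω) [IsProbabilityMeasure P]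
    (η : Ω → ℝ) (hη : Measurable η) (hη0 : ∀ ω, 0 ≤ η ω)
    (Cα α : ℝ) (hCα : 0 < Cα) (hα : 0 < α) (d : ℕ) (hd1 : 1 ≤ d)
    (hd : (d : ℝ) < α + 1)
    (hmargin : ∀ t > 0, P {ω | 0 < η ω ∧ η ω < t} ≤ ENNReal.ofReal (Cα * t ^ α)) :
    ∀ ε ∈ Set.Ioo (0 : ℝ) 1,
      ∫⁻ ω in {ω | ε < η ω}, ENNReal.ofReal (η ω ^ (-((d : ℝ) - 1))) ∂P ≤
        ENNReal.ofReal (1 + Cα * ((d : ℝ) - 1) / (α + 1 - (d : ℝ))) := by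
  intro ε hε
  set β : ℝ := (d : ℝ) - 1 with hβdef
  have hβ0 : 0 ≤ β := by
    have : (1 : ℝ) ≤ (d : ℝ) := by exact_mod_cast hd1
    linarith
  rcases eq_or_lt_of_le hβ0 with hβz | hβpos
  · -- d = 1 case: β = 0, integrand is 1
    have h1 : ∀ ω, ENNReal.ofReal (η ω ^ (-β)) = 1 := by
      intro ω
      rw [← hβz, neg_zero, Real.rpow_zero, ENNReal.ofReal_one]
    calc ∫⁻ ω in {ω | ε < η ω}, ENNReal.ofReal (η ω ^ (-β)) ∂P
        = ∫⁻ _ in {ω | ε < η ω}, 1 ∂P := by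
          exact lintegral_congr fun ω => h1 ω
      _ = P {ω | ε < η ω} := by simp
      _ ≤ 1 := prob_le_one
      _ ≤ ENNReal.ofReal (1 + Cα * β / (α + 1 - (d : ℝ))) := by
        rw [← hβz]
        simp
  · -- d ≥ 2 case
    have hβα : β < α := by simp only [hβdef]; linarith
    have hβne : β ≠ 0 := ne_of_gt hβpos
    have hfm : Measurable fun ω => η ω ^ (-β) := by fun_prop
    have key := lintegral_eq_lintegral_meas_lt (P.restrict {ω | ε < η ω})
      (f := fun ω => η ω ^ (-β))
      (Filter.Eventually.of_forall fun ω => Real.rpow_nonneg (hη0 ω) _)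
      hfm.aemeasurable
    rw [key]
    have hsm : MeasurableSet {ω | ε < η ω} := measurableSet_lt measurable_const hη
    -- split Ioi 0 into Ioc 0 1 and Ioi 1
    have hsplit : (Set.Ioi (0 : ℝ)) = Set.Ioc (0 : ℝ) 1 ∪ Set.Ioi 1 :=
      (Set.Ioc_union_Ioi_eq_Ioi zero_le_one).symm
    rw [hsplit, lintegral_union measurableSet_Ioi (Set.Ioc_disjoint_Ioi le_rfl)]
    have part1 : ∫⁻ t in Set.Ioc (0:ℝ) 1,
        (P.restrict {ω | ε < η ω}) {a | t < η a ^ (-β)} ≤ 1 := by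
      calc ∫⁻ t in Set.Ioc (0:ℝ) 1, (P.restrict {ω | ε < η ω}) {a | t < η a ^ (-β)}
          ≤ ∫⁻ _ in Set.Ioc (0:ℝ) 1, 1 := by
            refine setLIntegral_mono measurable_const fun t _ => ?_
            calc (P.restrict {ω | ε < η ω}) {a | t < η a ^ (-β)}
                ≤ P {a | t < η a ^ (-β)} := Measure.restrict_le_self _
              _ ≤ 1 := prob_le_one
        _ = 1 := by simp
    have part2 : ∫⁻ t in Set.Ioi (1:ℝ),
        (P.restrict {ω | ε < η ω}) {a | t < η a ^ (-β)} ≤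
        ENNReal.ofReal (Cα * β / (α - β)) := by
      have hexp : -(α / β) < -1 := by
        rw [neg_lt_neg_iff]
        rw [lt_div_iff₀ hβpos]
        linarith
      have step : ∀ t ∈ Set.Ioi (1:ℝ),
          (P.restrict {ω | ε < η ω}) {a | t < η a ^ (-β)} ≤
          ENNReal.ofReal (Cα * t ^ (-(α / β))) := by
        intro t ht
        have ht0 : (0:ℝ) < t := lt_trans one_pos ht
        rw [Measure.restrict_apply (measurableSet_lt measurable_const hfm)]
        have hsub : {a | t < η a ^ (-β)} ∩ {ω | ε < η ω} ⊆
            {ω | 0 < η ω ∧ η ω < t ^ (-(1/β))} := by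
          rintro a ⟨ha1, ha2⟩
          have hηa : 0 < η a := lt_trans hε.1 ha2
          refine ⟨hηa, ?_⟩
          -- from t < η a ^ (-β), get η a < t ^ (-(1/β))
          have ha1' : t < η a ^ (-β) := ha1
          have hpb : 0 < η a ^ β := Real.rpow_pos_of_pos hηa β
          have h2 : η a ^ β < t⁻¹ := by
            rw [Real.rpow_neg (hη0 a)] at ha1'
            exact (lt_inv_comm₀ ht0 hpb).mp ha1'
          have h3 : (η a ^ β) ^ (1/β) < (t⁻¹) ^ (1/β) :=
            Real.rpow_lt_rpow hpb.le h2 (by positivity)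
          rwa [← Real.rpow_mul (hη0 a), mul_one_div_cancel hβne, Real.rpow_one,
            Real.inv_rpow ht0.le, ← Real.rpow_neg ht0.le] at h3
        calc P ({a | t < η a ^ (-β)} ∩ {ω | ε < η ω})
            ≤ P {ω | 0 < η ω ∧ η ω < t ^ (-(1/β))} := measure_mono hsub
          _ ≤ ENNReal.ofReal (Cα * (t ^ (-(1/β))) ^ α) :=
              hmargin _ (Real.rpow_pos_of_pos ht0 _)
          _ = ENNReal.ofReal (Cα * t ^ (-(α / β))) := by
              rw [← Real.rpow_mul ht0.le]
              have : -(1/β) * α = -(α / β) := by ring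
              rw [this]
      calc ∫⁻ t in Set.Ioi (1:ℝ), (P.restrict {ω | ε < η ω}) {a | t < η a ^ (-β)}
          ≤ ∫⁻ t in Set.Ioi (1:ℝ), ENNReal.ofReal (Cα * t ^ (-(α / β))) :=
            setLIntegral_mono (by fun_prop) step
        _ = ENNReal.ofReal (∫ t in Set.Ioi (1:ℝ), Cα * t ^ (-(α / β))) := by
            rw [← ofReal_integral_eq_lintegral_ofReal]
            · exact (integrableOn_Ioi_rpow_of_lt hexp one_pos).const_mul Cα
            · filter_upwards [ae_restrict_mem measurableSet_Ioi] with t ht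
              have : (0:ℝ) < t := lt_trans one_pos ht
              positivity
        _ = ENNReal.ofReal (Cα * β / (α - β)) := by
            rw [integral_const_mul, integral_Ioi_rpow_of_lt hexp one_pos]
            congr 1
            have h1 : -(α/β) + 1 = -((α-β)/β) := by field_simp; ring
            rw [Real.one_rpow, h1, neg_div_neg_eq, one_div_div, mul_div_assoc]
    calc _ ≤ 1 + ENNReal.ofReal (Cα * β / (α - β)) := add_le_add part1 part2
      _ = ENNReal.ofReal (1 + Cα * β / (α - β)) := by
          rw [ENNReal.ofReal_add zero_le_one
            (div_nonneg (by positivity) (by linarith)), ENNReal.ofReal_one]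
      _ = ENNReal.ofReal (1 + Cα * β / (α + 1 - (d : ℝ))) := by
          congr 2
          simp only [hβdef]
          ring_nf
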